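/- arXiv:1406.4931 — 2 statements merged into one kernel-verified Lean document; each statement's English description precedes it below -/
import Mathlib

section
/- For all r > 0, sinh³(r) > r³ cosh(r). -/
open Real Set

lemma aux_cosh_ge (x : ℝ) (hx : 0 ≤ x) : 1 + x ^ 2 / 2 ≤ Real.cosh x := by
  have hmono : MonotoneOn (fun x : ℝ => Real.cosh x - (1 + x ^ 2 / 2)) (Ici 0) := by
    apply monotoneOn_of_deriv_nonneg (convex_Ici _)
    · exact (Real.continuous_cosh.sub (by continuity)).continuousOn
    · intro y hy
      exact (Real.differentiable_cosh.sub (by fun_prop)).differentiableAt.differentiableWithinAt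
    · intro y hy
      rw [interior_Ici, mem_Ioi] at hy
      have : deriv (fun x : ℝ => Real.cosh x - (1 + x ^ 2 / 2)) y = Real.sinh y - y := by
        have h1 : HasDerivAt (fun x : ℝ => Real.cosh x - (1 + x ^ 2 / 2)) (Real.sinh y - (0 + 2 * y ^ 1 / 2)) y := by
          exact (Real.hasDerivAt_cosh y).sub ((hasDerivAt_const y 1).add
            (((hasDerivAt_pow 2 y)).div_const 2))
        simpa using h1.deriv
      rw [this, sub_nonneg]
      exact (Real.self_le_sinh_iff.2 hy.le)
  have := hmono (self_mem_Ici) (mem_Ici.2 hx) hx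
  simpa using this

lemma aux_sinh_ge (x : ℝ) (hx : 0 ≤ x) : x + x ^ 3 / 6 ≤ Real.sinh x := by
  have hmono : MonotoneOn (fun x : ℝ => Real.sinh x - (x + x ^ 3 / 6)) (Ici 0) := by
    apply monotoneOn_of_deriv_nonneg (convex_Ici _)
    · exact (Real.continuous_sinh.sub (by continuity)).continuousOn
    · intro y hy
      exact (Real.differentiable_sinh.sub (by fun_prop)).differentiableAt.differentiableWithinAt
    · intro y hy
      rw [interior_Ici, mem_Ioi] at hy
      have h1 : HasDerivAt (fun x : ℝ => Real.sinh x - (x + x ^ 3 / 6))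
          (Real.cosh y - (1 + 3 * y ^ 2 / 6)) y :=
        (Real.hasDerivAt_sinh y).sub ((hasDerivAt_id y).add ((hasDerivAt_pow 3 y).div_const 6))
      rw [h1.deriv, sub_nonneg]
      have := aux_cosh_ge y hy.le
      nlinarith
  have := hmono (self_mem_Ici) (mem_Ici.2 hx) hx
  simpa using this

lemma aux_sinh_lt (x : ℝ) (hx : 0 < x) : Real.sinh x < x * Real.cosh x := by
  have hmono : StrictMonoOn (fun x : ℝ => x * Real.cosh x - Real.sinh x) (Ici 0) := by
    apply strictMonoOn_of_deriv_pos (convex_Ici _)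
    · exact ((continuous_id.mul Real.continuous_cosh).sub Real.continuous_sinh).continuousOn
    · intro y hy
      rw [interior_Ici, mem_Ioi] at hy
      have h1 : HasDerivAt (fun x : ℝ => x * Real.cosh x - Real.sinh x)
          (1 * Real.cosh y + y * Real.sinh y - Real.cosh y) y :=
        ((hasDerivAt_id y).mul (Real.hasDerivAt_cosh y)).sub (Real.hasDerivAt_sinh y)
      rw [h1.deriv]
      have := Real.sinh_pos_iff.2 hy
      nlinarith
  have := hmono (self_mem_Ici) (mem_Ici.2 hx.le) hx
  simp only [Real.cosh_zero, Real.sinh_zero, mul_one, zero_mul, sub_zero, sub_self] at this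
  linarith

/-- For all `r > 0`, `sinh³ r > r³ cosh r`. -/
theorem stmt3 (r : ℝ) (hr : 0 < r) :
    r ^ 3 * Real.cosh r < Real.sinh r ^ 3 := by
  have hmono : StrictMonoOn (fun x : ℝ => Real.sinh x ^ 3 - x ^ 3 * Real.cosh x) (Ici 0) := by
    apply strictMonoOn_of_deriv_pos (convex_Ici _)
    · exact ((Real.continuous_sinh.pow 3).sub ((continuous_pow 3).mul Real.continuous_cosh)).continuousOn
    · intro y hy
      rw [interior_Ici, mem_Ioi] at hy
      have h1 : HasDerivAt (fun x : ℝ => Real.sinh x ^ 3 - x ^ 3 * Real.cosh x)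
          (3 * Real.sinh y ^ 2 * Real.cosh y -
            (3 * y ^ 2 * Real.cosh y + y ^ 3 * Real.sinh y)) y := by
        have hs : HasDerivAt (fun x : ℝ => Real.sinh x ^ 3)
            ((3 : ℕ) * Real.sinh y ^ 2 * Real.cosh y) y := by
          simpa using! (Real.hasDerivAt_sinh y).pow 3
        have hp : HasDerivAt (fun x : ℝ => x ^ 3 * Real.cosh x)
            ((3 : ℕ) * y ^ 2 * Real.cosh y + y ^ 3 * Real.sinh y) y := by
          simpa using! (hasDerivAt_pow 3 y).mul (Real.hasDerivAt_cosh y)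
        simpa using! hs.sub hp
      rw [h1.deriv]
      -- key inequality
      have hs3 : y + y ^ 3 / 6 ≤ Real.sinh y := aux_sinh_ge y hy.le
      have hsl : Real.sinh y < y * Real.cosh y := aux_sinh_lt y hy
      have hcpos : 0 < Real.cosh y := Real.cosh_pos y
      have hspos : 0 < Real.sinh y := Real.sinh_pos_iff.2 hy
      -- sinh² ≥ y² + y⁴/3
      have hsq : y ^ 2 + y ^ 4 / 3 ≤ Real.sinh y ^ 2 := by
        have h2 : (y + y ^ 3 / 6) * (y + y ^ 3 / 6) ≤ Real.sinh y * Real.sinh y :=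
          mul_le_mul hs3 hs3 (by positivity) hspos.le
        nlinarith [pow_nonneg hy.le 6]
      -- 3 cosh (sinh² − y²) ≥ y⁴ cosh > y³ sinh
      nlinarith [mul_pos (pow_pos hy 3) hcpos, mul_lt_mul_of_pos_left hsl (pow_pos hy 3)]
  have := hmono (self_mem_Ici) (mem_Ici.2 hr.le) hr
  simp only [Real.sinh_zero, Real.cosh_zero] at this
  nlinarith [this]
end

section
/- For every integer n ≥ 2 and every r > 0, ((n−1)/2)·((n−3)/2)·(1/sinh²r − 1/r²) + ((n−1)/2)² > 0. -/
lemma sinh_le_mul_cosh {x : ℝ} (hx : 0 ≤ x) : Real.sinh x ≤ x * Real.cosh x := by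
  have h : MonotoneOn (fun x => x * Real.cosh x - Real.sinh x) (Set.Ici 0) := by
    apply monotoneOn_of_deriv_nonneg (convex_Ici 0)
    · fun_prop
    · intro y hy
      exact ((differentiableAt_id.mul Real.differentiable_cosh.differentiableAt).sub
        Real.differentiable_sinh.differentiableAt).differentiableWithinAt
    · intro y hy
      rw [interior_Ici, Set.mem_Ioi] at hy
      have : deriv (fun x => x * Real.cosh x - Real.sinh x) y = y * Real.sinh y := by
        rw [deriv_fun_sub (by fun_prop) (by fun_prop), deriv_fun_mul (by fun_prop) (by fun_prop),
          Real.deriv_cosh, Real.deriv_sinh]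
        simp
      rw [this]
      exact mul_nonneg hy.le (Real.sinh_nonneg_iff.2 hy.le)
  have := h (Set.self_mem_Ici) (Set.mem_Ici.2 hx) hx
  simp at this
  linarith

/-- For `r > 0`, `-1 ≤ 1/sinh²r - 1/r²` and `1/sinh²r - 1/r² < 0`. -/
lemma factor_bounds {r : ℝ} (hr : 0 < r) :
    -1 ≤ 1 / Real.sinh r ^ 2 - 1 / r ^ 2 ∧ 1 / Real.sinh r ^ 2 - 1 / r ^ 2 < 0 := by
  have hs : 0 < Real.sinh r := Real.sinh_pos_iff.2 hr
  have hrs : r < Real.sinh r := Real.self_lt_sinh_iff.2 hr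
  constructor
  · rcases le_or_gt 1 r with h1 | h1
    · have h2 : 1 / r ^ 2 ≤ 1 := by
        rw [div_le_one (by positivity)]
        nlinarith
      have : 0 < 1 / Real.sinh r ^ 2 := by positivity
      linarith
    · -- r < 1 : use sinh r ≤ r cosh r, cosh² = 1 + sinh²
      have hc := sinh_le_mul_cosh hr.le
      have hcs : Real.cosh r ^ 2 = 1 + Real.sinh r ^ 2 := by
        rw [Real.cosh_sq]; ring
      have hs2 : Real.sinh r ^ 2 ≤ r ^ 2 * (1 + Real.sinh r ^ 2) := by
        nlinarith [Real.cosh_pos r]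
      -- sinh²(1 - r²) ≤ r², so 1/sinh² ≥ (1 - r²)/r² = 1/r² - 1
      have key : 1 / r ^ 2 - 1 ≤ 1 / Real.sinh r ^ 2 := by
        rw [show (1:ℝ) / r ^ 2 - 1 = (1 - r ^ 2) / r ^ 2 by field_simp,
          div_le_div_iff₀ (by positivity) (by positivity)]
        nlinarith
      linarith
  · have : 1 / Real.sinh r ^ 2 < 1 / r ^ 2 := by
      apply one_div_lt_one_div_of_lt (by positivity)
      nlinarith
    linarith

/-- For every integer `n ≥ 2` and every `r > 0`,
`((n−1)/2)·((n−3)/2)·(1/sinh²r − 1/r²) + ((n−1)/2)² > 0`. -/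
theorem stmt7 (n : ℕ) (hn : 2 ≤ n) (r : ℝ) (hr : 0 < r) :
    0 < ((n : ℝ) - 1) / 2 * (((n : ℝ) - 3) / 2) *
          (1 / Real.sinh r ^ 2 - 1 / r ^ 2) + (((n : ℝ) - 1) / 2) ^ 2 := by
  obtain ⟨hlow, hup⟩ := factor_bounds hr
  set f := 1 / Real.sinh r ^ 2 - 1 / r ^ 2 with hf
  have hn' : (2 : ℝ) ≤ (n : ℝ) := by exact_mod_cast hn
  rcases lt_or_ge ((n : ℝ)) 3 with h3 | h3
  · -- n = 2 : coefficient is negative, factor negative, product positive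
    have hn2 : (n : ℝ) = 2 := by
      have : n < 3 := by exact_mod_cast h3
      interval_cases n <;> simp_all
    rw [hn2]
    norm_num
    nlinarith
  · -- n ≥ 3 : coefficient nonneg, use f ≥ -1
    have hc : (0:ℝ) ≤ ((n:ℝ) - 1)/2 * (((n:ℝ) - 3)/2) :=
      mul_nonneg (by linarith) (by linarith)
    have hcf : ((n:ℝ) - 1)/2 * (((n:ℝ) - 3)/2) * (-1) ≤ ((n:ℝ) - 1)/2 * (((n:ℝ) - 3)/2) * f :=
      mul_le_mul_of_nonneg_left hlow hc
    nlinarith [hcf]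
end
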